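/- arXiv:1704.07686 — 2 statements merged into one kernel-verified Lean document; each statement's English description precedes it below -/
import Mathlib

section
/- For all integers n ≥ 0, k ≥ 0, m with −1 ≤ m ≤ n+1, and l with 0 ≤ l ≤ k, the Lie bracket of the vector fields A(m,n) and B(l,k) satisfies [A(m,n), B(l,k)] = ((k+2)/(k+n+2))·( l − k·(m+1)/(n+2) )·B(m+l, n+k) − n·A(m+l, n+k). (Part of Lemma 2.1.) -/
/-- Monomial `x^a * y^b` for integer exponents, zero if an exponent is negative. -/
noncomputable def M (a b : ℤ) : ℝ × ℝ → ℝ :=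
  fun p => if 0 ≤ a ∧ 0 ≤ b then p.1 ^ a.toNat * p.2 ^ b.toNat else 0

/-- The vector field `A(l,k)`. -/
noncomputable def A (l k : ℤ) : ℝ × ℝ → ℝ × ℝ :=
  fun p => (((k : ℝ) - (l : ℝ) + 1) / ((k : ℝ) + 2) * M (l + 1) (k - l) p,
            -(((l : ℝ) + 1) / ((k : ℝ) + 2)) * M l (k - l + 1) p)

/-- The vector field `B(l,k)`. -/
noncomputable def B (l k : ℤ) : ℝ × ℝ → ℝ × ℝ :=
  fun p => (M (l + 1) (k - l) p, M l (k - l + 1) p)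

/-- The scalar monomial function `Z(l,k)`. -/
noncomputable def Z (l k : ℤ) : ℝ × ℝ → ℝ := M l (k - l)

/-- Lie bracket of planar vector fields: `[X,Y](p) = DY(p)(X(p)) - DX(p)(Y(p))`. -/
noncomputable def lieBracket (X Y : ℝ × ℝ → ℝ × ℝ) : ℝ × ℝ → ℝ × ℝ :=
  fun p => fderiv ℝ Y p (X p) - fderiv ℝ X p (Y p)

open ContinuousLinearMap in
lemma hasFDerivAt_mono (c : ℝ) (i j : ℕ) (p : ℝ × ℝ) :
    HasFDerivAt (fun q : ℝ × ℝ => c * q.1 ^ i * q.2 ^ j)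
      ((c * i * p.1 ^ (i - 1) * p.2 ^ j) • ContinuousLinearMap.fst ℝ ℝ ℝ +
       (c * j * p.1 ^ i * p.2 ^ (j - 1)) • ContinuousLinearMap.snd ℝ ℝ ℝ) p := by
  have hx : HasFDerivAt (fun q : ℝ × ℝ => q.1 ^ i)
      (((i : ℝ) * p.1 ^ (i - 1)) • ContinuousLinearMap.fst ℝ ℝ ℝ) p :=
    (hasDerivAt_pow i p.1).comp_hasFDerivAt p hasFDerivAt_fst
  have hy : HasFDerivAt (fun q : ℝ × ℝ => q.2 ^ j)
      (((j : ℝ) * p.2 ^ (j - 1)) • ContinuousLinearMap.snd ℝ ℝ ℝ) p :=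
    (hasDerivAt_pow j p.2).comp_hasFDerivAt p hasFDerivAt_snd
  have h := ((hx.mul hy).const_mul c)
  refine HasFDerivAt.congr_of_eventuallyEq (h.congr_fderiv ?_) (Filter.Eventually.of_forall fun q => ?_)
  rotate_left
  · simp only [Pi.mul_apply]; ring
  · apply ContinuousLinearMap.ext; intro w
    simp [ContinuousLinearMap.smul_apply]
    ring

lemma lieBracket_mono (c1 c2 d1 d2 : ℝ) (a1 b1 a2 b2 e1 f1 e2 f2 : ℕ) :
    lieBracket (fun q : ℝ × ℝ => (c1 * q.1 ^ a1 * q.2 ^ b1, c2 * q.1 ^ a2 * q.2 ^ b2))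
      (fun q : ℝ × ℝ => (d1 * q.1 ^ e1 * q.2 ^ f1, d2 * q.1 ^ e2 * q.2 ^ f2)) =
    fun p =>
      (d1 * e1 * p.1 ^ (e1 - 1) * p.2 ^ f1 * (c1 * p.1 ^ a1 * p.2 ^ b1)
         + d1 * f1 * p.1 ^ e1 * p.2 ^ (f1 - 1) * (c2 * p.1 ^ a2 * p.2 ^ b2)
         - (c1 * a1 * p.1 ^ (a1 - 1) * p.2 ^ b1 * (d1 * p.1 ^ e1 * p.2 ^ f1)
            + c1 * b1 * p.1 ^ a1 * p.2 ^ (b1 - 1) * (d2 * p.1 ^ e2 * p.2 ^ f2)),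
       d2 * e2 * p.1 ^ (e2 - 1) * p.2 ^ f2 * (c1 * p.1 ^ a1 * p.2 ^ b1)
         + d2 * f2 * p.1 ^ e2 * p.2 ^ (f2 - 1) * (c2 * p.1 ^ a2 * p.2 ^ b2)
         - (c2 * a2 * p.1 ^ (a2 - 1) * p.2 ^ b2 * (d1 * p.1 ^ e1 * p.2 ^ f1)
            + c2 * b2 * p.1 ^ a2 * p.2 ^ (b2 - 1) * (d2 * p.1 ^ e2 * p.2 ^ f2))) := by
  funext p
  have hX := HasFDerivAt.prodMk (hasFDerivAt_mono c1 a1 b1 p) (hasFDerivAt_mono c2 a2 b2 p)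
  have hY := HasFDerivAt.prodMk (hasFDerivAt_mono d1 e1 f1 p) (hasFDerivAt_mono d2 e2 f2 p)
  simp only [lieBracket, hX.fderiv, hY.fderiv]
  simp [ContinuousLinearMap.prod_apply, ContinuousLinearMap.smul_apply, Prod.mk_sub_mk]

lemma lieBracket_shape (c1 c2 d1 d2 : ℝ) (a b u v : ℕ) :
    lieBracket (fun q : ℝ × ℝ => (c1 * q.1 ^ (a + 1) * q.2 ^ b, c2 * q.1 ^ a * q.2 ^ (b + 1)))
      (fun q : ℝ × ℝ => (d1 * q.1 ^ (u + 1) * q.2 ^ v, d2 * q.1 ^ u * q.2 ^ (v + 1))) =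
    fun p =>
      ((d1 * c1 * (u + 1 : ℕ) + d1 * c2 * (v : ℕ) - c1 * d1 * (a + 1 : ℕ) - c1 * d2 * (b : ℕ))
          * p.1 ^ (a + u + 1) * p.2 ^ (b + v),
       (d2 * c1 * (u : ℕ) + d2 * c2 * (v + 1 : ℕ) - c2 * d1 * (a : ℕ) - c2 * d2 * (b + 1 : ℕ))
          * p.1 ^ (a + u) * p.2 ^ (b + v + 1)) := by
  rw [lieBracket_mono]
  funext p
  obtain _ | a := a <;> obtain _ | b := b <;> obtain _ | u := u <;> obtain _ | v := v <;>
    simp only [Nat.add_sub_cancel, Nat.succ_sub_one, Nat.zero_sub, Nat.sub_zero, pow_zero,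
      Nat.cast_zero, Prod.mk.injEq] <;>
    refine ⟨by push_cast; ring, by push_cast; ring⟩

lemma M_eq (a b : ℕ) : M (a : ℤ) (b : ℤ) = fun p => p.1 ^ a * p.2 ^ b := by
  funext p; simp [M]

lemma M_negl (a b : ℤ) (h : a < 0) : M a b = fun _ => (0 : ℝ) := by
  funext p; simp only [M]; rw [if_neg]; omega

lemma M_negr (a b : ℤ) (h : b < 0) : M a b = fun _ => (0 : ℝ) := by
  funext p; simp only [M]; rw [if_neg]; omega

lemma A_eq (a c : ℕ) : A (a : ℤ) ((a + c : ℕ) : ℤ) = fun q : ℝ × ℝ =>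
    (((c : ℝ) + 1) / ((a : ℝ) + (c : ℝ) + 2) * q.1 ^ (a + 1) * q.2 ^ c,
     -(((a : ℝ) + 1) / ((a : ℝ) + (c : ℝ) + 2)) * q.1 ^ a * q.2 ^ (c + 1)) := by
  unfold A
  rw [show ((a : ℤ) + 1) = ((a + 1 : ℕ) : ℤ) by push_cast; ring,
      show (((a + c : ℕ) : ℤ) - a) = ((c : ℕ) : ℤ) by push_cast; ring,
      show (((c : ℕ) : ℤ) + 1) = ((c + 1 : ℕ) : ℤ) by push_cast; ring,
      M_eq, M_eq]
  funext q
  simp only [Prod.mk.injEq]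
  constructor <;> (push_cast; ring)

lemma B_eq (a c : ℕ) : B (a : ℤ) ((a + c : ℕ) : ℤ) = fun q : ℝ × ℝ =>
    ((1 : ℝ) * q.1 ^ (a + 1) * q.2 ^ c, (1 : ℝ) * q.1 ^ a * q.2 ^ (c + 1)) := by
  unfold B
  rw [show ((a : ℤ) + 1) = ((a + 1 : ℕ) : ℤ) by push_cast; ring,
      show (((a + c : ℕ) : ℤ) - a) = ((c : ℕ) : ℤ) by push_cast; ring,
      show (((c : ℕ) : ℤ) + 1) = ((c + 1 : ℕ) : ℤ) by push_cast; ring,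
      M_eq, M_eq]
  funext q
  simp only [Prod.mk.injEq]
  constructor <;> (push_cast; ring)

lemma A_neg (c : ℕ) : A (-1) (c : ℤ) = fun q : ℝ × ℝ =>
    ((1 : ℝ) * q.1 ^ 0 * q.2 ^ (c + 1), (0 : ℝ) * q.1 ^ 0 * q.2 ^ 0) := by
  have hc : ((c : ℝ) + 2) ≠ 0 := by positivity
  unfold A
  rw [show ((-1 : ℤ) + 1) = ((0 : ℕ) : ℤ) by norm_num,
      show ((c : ℤ) - (-1)) = ((c + 1 : ℕ) : ℤ) by push_cast; ring,
      M_eq, M_negl (-1) (((c + 1 : ℕ) : ℤ) + 1) (by norm_num)]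
  funext q
  simp only [Prod.mk.injEq]
  constructor <;> (push_cast; field_simp; try ring)

lemma A_top (c : ℕ) : A ((c + 1 : ℕ) : ℤ) (c : ℤ) = fun q : ℝ × ℝ =>
    ((0 : ℝ) * q.1 ^ 0 * q.2 ^ 0, (-1 : ℝ) * q.1 ^ (c + 1) * q.2 ^ 0) := by
  have hc : ((c : ℝ) + 2) ≠ 0 := by positivity
  unfold A
  rw [show ((c : ℤ) - ((c + 1 : ℕ) : ℤ) + 1) = ((0 : ℕ) : ℤ) by push_cast; ring,
      M_eq, M_negr (((c + 1 : ℕ) : ℤ) + 1) ((c : ℤ) - ((c + 1 : ℕ) : ℤ)) (by push_cast; omega)]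
  funext q
  simp only [Prod.mk.injEq]
  constructor <;> (push_cast; field_simp; try ring)

lemma B_neg (c : ℕ) : B (-1) (c : ℤ) = fun q : ℝ × ℝ =>
    ((1 : ℝ) * q.1 ^ 0 * q.2 ^ (c + 1), (0 : ℝ) * q.1 ^ 0 * q.2 ^ 0) := by
  unfold B
  rw [show ((-1 : ℤ) + 1) = ((0 : ℕ) : ℤ) by norm_num,
      show ((c : ℤ) - (-1)) = ((c + 1 : ℕ) : ℤ) by push_cast; ring,
      M_eq, M_negl (-1) (((c + 1 : ℕ) : ℤ) + 1) (by norm_num)]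
  funext q
  simp only [Prod.mk.injEq]
  constructor <;> (push_cast; ring)

lemma B_top (c : ℕ) : B ((c + 1 : ℕ) : ℤ) (c : ℤ) = fun q : ℝ × ℝ =>
    ((0 : ℝ) * q.1 ^ 0 * q.2 ^ 0, (1 : ℝ) * q.1 ^ (c + 1) * q.2 ^ 0) := by
  unfold B
  rw [show ((c : ℤ) - ((c + 1 : ℕ) : ℤ) + 1) = ((0 : ℕ) : ℤ) by push_cast; ring,
      M_eq, M_negr (((c + 1 : ℕ) : ℤ) + 1) ((c : ℤ) - ((c + 1 : ℕ) : ℤ)) (by push_cast; omega)]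
  funext q
  simp only [Prod.mk.injEq]
  constructor <;> (push_cast; ring)


/-- `[A(m,n), B(l,k)] = ((k+2)/(k+n+2))(l - k(m+1)/(n+2)) • B(m+l,n+k) - n • A(m+l,n+k)`. -/
theorem stmt3 (n k m l : ℤ) (hn : 0 ≤ n) (hk : 0 ≤ k) (hm : -1 ≤ m) (hmn : m ≤ n + 1)
    (hl0 : 0 ≤ l) (hlk : l ≤ k) :
    lieBracket (A m n) (B l k) =
      fun p => ((((k : ℝ) + 2) / ((k : ℝ) + (n : ℝ) + 2)) *
            ((l : ℝ) - (k : ℝ) * ((m : ℝ) + 1) / ((n : ℝ) + 2))) • B (m + l) (n + k) p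
          - (n : ℝ) • A (m + l) (n + k) p := by
  lift n to ℕ using hn with n'
  lift k to ℕ using hk with k'
  lift l to ℕ using hl0 with l'
  have hlk' : l' ≤ k' := by exact_mod_cast hlk
  obtain ⟨e, rfl⟩ := Nat.exists_eq_add_of_le hlk'
  rcases hm.eq_or_lt with hme | hmlt
  · -- m = -1
    have hm1 : m = -1 := hme.symm
    subst hm1
    rcases Nat.eq_zero_or_pos l' with rfl | hl'
    · -- l = 0
      have h1 : ((n' : ℝ) + 2) ≠ 0 := by positivity
      have h2 : ((e : ℝ) + (n' : ℝ) + 2) ≠ 0 := by positivity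
      have h3 : ((n' : ℝ) + (e : ℝ) + 2) ≠ 0 := by positivity
      funext p
      rw [A_neg n', B_eq 0 e, lieBracket_mono,
          show ((-1 : ℤ) + ((0 : ℕ) : ℤ)) = (-1 : ℤ) by norm_num,
          show ((n' : ℤ) + ((0 + e : ℕ) : ℤ)) = ((n' + e : ℕ) : ℤ) by push_cast; ring,
          B_neg (n' + e), A_neg (n' + e)]
      simp only [Prod.smul_mk, Prod.mk_sub_mk, smul_eq_mul, Prod.mk.injEq, Nat.add_sub_cancel,
        Nat.zero_sub, Nat.sub_zero, pow_zero, Nat.cast_zero]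
      constructor <;> (push_cast; field_simp; try ring)
    · -- l = t + 1
      obtain ⟨t, rfl⟩ : ∃ t, l' = t + 1 := ⟨l' - 1, by omega⟩
      have h1 : ((n' : ℝ) + 2) ≠ 0 := by positivity
      have h2 : ((t : ℝ) + (n' : ℝ) + (e : ℝ) + 2) ≠ 0 := by positivity
      funext p
      rw [A_neg n', B_eq (t + 1) e, lieBracket_mono,
          show ((-1 : ℤ) + ((t + 1 : ℕ) : ℤ)) = ((t : ℕ) : ℤ) by push_cast; ring,
          show ((n' : ℤ) + ((t + 1 + e : ℕ) : ℤ)) = ((t + (n' + e + 1) : ℕ) : ℤ) by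
            push_cast; ring,
          B_eq t (n' + e + 1), A_eq t (n' + e + 1)]
      simp only [Prod.smul_mk, Prod.mk_sub_mk, smul_eq_mul, Prod.mk.injEq, Nat.add_sub_cancel,
        Nat.zero_sub, Nat.sub_zero, pow_zero, Nat.cast_zero]
      constructor <;> (push_cast; field_simp; try ring)
  · -- 0 ≤ m
    have h0 : 0 ≤ m := by omega
    lift m to ℕ using h0 with m'
    by_cases htop : m' ≤ n'
    · -- generic case: m' ≤ n'
      obtain ⟨d, rfl⟩ := Nat.exists_eq_add_of_le htop
      have h1 : ((m' : ℝ) + (d : ℝ) + 2) ≠ 0 := by positivity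
      have h2 : ((m' : ℝ) + (l' : ℝ) + (d : ℝ) + (e : ℝ) + 2) ≠ 0 := by positivity
      funext p
      rw [A_eq m' d, B_eq l' e, lieBracket_shape,
          show ((m' : ℤ) + (l' : ℤ)) = ((m' + l' : ℕ) : ℤ) by push_cast; ring,
          show (((m' + d : ℕ) : ℤ) + ((l' + e : ℕ) : ℤ)) = (((m' + l') + (d + e) : ℕ) : ℤ) by
            push_cast; ring,
          B_eq (m' + l') (d + e), A_eq (m' + l') (d + e)]
      simp only [Prod.smul_mk, Prod.mk_sub_mk, smul_eq_mul, Prod.mk.injEq]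
      constructor <;> (push_cast; field_simp; try ring)
    · -- m' = n' + 1
      obtain rfl : m' = n' + 1 := by omega
      have h1 : ((n' : ℝ) + 2) ≠ 0 := by positivity
      rcases Nat.eq_zero_or_pos e with rfl | he'
      · -- l = k
        have h2 : ((n' : ℝ) + (l' : ℝ) + 2) ≠ 0 := by positivity
        funext p
        rw [show ((n' + 1 : ℕ) : ℤ) = ((n' + 1 : ℕ) : ℤ) from rfl,
            A_top n', B_eq l' 0, lieBracket_mono,
            show (((n' + 1 : ℕ) : ℤ) + (l' : ℤ)) = (((n' + l') + 1 : ℕ) : ℤ) by push_cast; ring,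
            show ((n' : ℤ) + ((l' + 0 : ℕ) : ℤ)) = ((n' + l' : ℕ) : ℤ) by push_cast; ring,
            B_top (n' + l'), A_top (n' + l')]
        simp only [Prod.smul_mk, Prod.mk_sub_mk, smul_eq_mul, Prod.mk.injEq, Nat.add_sub_cancel,
          Nat.zero_sub, Nat.sub_zero, pow_zero, Nat.cast_zero]
        constructor <;> (push_cast; field_simp; try ring)
      · -- l < k
        obtain ⟨t, rfl⟩ : ∃ t, e = t + 1 := ⟨e - 1, by omega⟩
        have h2 : ((n' : ℝ) + (l' : ℝ) + (t : ℝ) + 3) ≠ 0 := by positivity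
        funext p
        rw [A_top n', B_eq l' (t + 1), lieBracket_mono,
            show (((n' + 1 : ℕ) : ℤ) + (l' : ℤ)) = (((n' + l' + 1) : ℕ) : ℤ) by push_cast; ring,
            show ((n' : ℤ) + ((l' + (t + 1) : ℕ) : ℤ)) = (((n' + l' + 1) + t : ℕ) : ℤ) by
              push_cast; ring,
            B_eq (n' + l' + 1) t, A_eq (n' + l' + 1) t]
        simp only [Prod.smul_mk, Prod.mk_sub_mk, smul_eq_mul, Prod.mk.injEq, Nat.add_sub_cancel,
          Nat.zero_sub, Nat.sub_zero, pow_zero, Nat.cast_zero]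
        constructor <;> (push_cast; field_simp; try ring)
end

section
/- Let r ≥ 1 be an integer, a_r a real number, and l ≥ 1, n ≥ 1 integers with 2l−1 ≤ n. Then Z(2l−1, n)·𝔸_r + [𝒵(2l−1, n), 𝔸_r] = 0, where · denotes the action of a scalar function on a vector field by pointwise multiplication and [·,·] is the Lie bracket of vector fields. (Odd case of the lemma on time-rescaling generators.) -/
/-- Pochhammer-type product `(a)^n_b = a (a+b) (a+2b) ⋯ (a+(n-1)b)`. -/
noncomputable def poch (a b : ℝ) (n : ℕ) : ℝ := ∏ j ∈ Finset.range n, (a + (j : ℝ) * b)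

/-- The vector field `𝔸_r = A(1,0) + a_r • A(-1,r)`, i.e. `(a_r y^{r+1}, -x)`. -/
noncomputable def bbA (r : ℤ) (ar : ℝ) : ℝ × ℝ → ℝ × ℝ :=
  fun p => A 1 0 p + ar • A (-1) r p

/-- The transformation generator `𝒵(m,n)`. -/
noncomputable def calZ (r : ℤ) (ar : ℝ) (m n : ℤ) : ℝ × ℝ → ℝ × ℝ :=
  fun p => (1 / ((m : ℝ) - (n : ℝ) - 1)) • A m n p + (1 / ((n : ℝ) + 2)) • B m n p
    - ∑ i ∈ Finset.range (((m + 1) / 2).toNat),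
        (ar ^ (i + 1) * ((n : ℝ) + (r : ℝ) * ((i : ℝ) + 1) + 2) *
            poch ((m : ℝ) - 1) (-2) i /
          poch ((n : ℝ) - (m : ℝ) + 1) ((r : ℝ) + 2) (i + 2)) •
        A (m - 2 * ((i : ℤ) + 1)) (n + r * ((i : ℤ) + 1)) p

lemma cast_toNat (a : ℤ) (h : 0 ≤ a) : ((a.toNat : ℝ)) = (a : ℝ) := by
  exact_mod_cast congrArg (Int.cast : ℤ → ℝ) (Int.toNat_of_nonneg h)
lemma castZ (a : ℤ) (h : a = 0) : (a : ℝ) = 0 := by exact_mod_cast congrArg (Int.cast : ℤ → ℝ) h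
lemma A_apply (l k : ℤ) (hl : -1 ≤ l) (hlk : l ≤ k + 1) :
    A l k = fun p => (((k:ℝ)-(l:ℝ)+1)/((k:ℝ)+2) * (p.1 ^ (l+1).toNat * p.2 ^ (k-l).toNat),
      -(((l:ℝ)+1)/((k:ℝ)+2)) * (p.1 ^ l.toNat * p.2 ^ (k-l+1).toNat)) := by
  funext p
  unfold A M
  by_cases h1 : 0 ≤ k - l <;> by_cases h2 : 0 ≤ l
  · rw [if_pos ⟨by omega, h1⟩, if_pos ⟨h2, by omega⟩]
  · have h3 : l = -1 := by omega
    subst h3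
    rw [if_pos ⟨by omega, by omega⟩, if_neg (by omega)]
    norm_num
  · have h3 : (k:ℝ) - (l:ℝ) + 1 = 0 := by
      have : (((k - l + 1 : ℤ)) : ℝ) = 0 := castZ _ (by omega)
      push_cast at this; linarith
    rw [if_neg (by omega), if_pos ⟨h2, by omega⟩]
    simp [h3]
  · have h3 : l = -1 := by omega
    have h4 : k = -2 := by omega
    subst h3; subst h4
    norm_num
lemma B_apply (m n : ℤ) (hm : 0 ≤ m) (hmn : m ≤ n) :
    B m n = fun p => (p.1 ^ (m+1).toNat * p.2 ^ (n-m).toNat,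
      p.1 ^ m.toNat * p.2 ^ (n-m+1).toNat) := by
  funext p
  unfold B M
  rw [if_pos ⟨by omega, by omega⟩, if_pos ⟨by omega, by omega⟩]
noncomputable def DM (c1 c2 : ℝ) : ℝ × ℝ →L[ℝ] ℝ :=
  c1 • ContinuousLinearMap.fst ℝ ℝ ℝ + c2 • ContinuousLinearMap.snd ℝ ℝ ℝ
@[simp] lemma DM_apply (c1 c2 : ℝ) (v : ℝ × ℝ) : DM c1 c2 v = c1 * v.1 + c2 * v.2 := rfl
noncomputable def DV (a b c d : ℝ) : ℝ × ℝ →L[ℝ] ℝ × ℝ := (DM a b).prod (DM c d)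
@[simp] lemma DV_apply (a b c d : ℝ) (v : ℝ × ℝ) :
    DV a b c d v = (a * v.1 + b * v.2, c * v.1 + d * v.2) := rfl
lemma hasFDerivAt_cmono (c : ℝ) (a b : ℕ) (p : ℝ × ℝ) :
    HasFDerivAt (fun q : ℝ × ℝ => c * (q.1 ^ a * q.2 ^ b))
      (DM (c * a * p.1 ^ (a - 1) * p.2 ^ b) (c * b * p.1 ^ a * p.2 ^ (b - 1))) p := by
  have h1 : HasFDerivAt (fun q : ℝ × ℝ => q.1 ^ a)
      (((a : ℝ) * p.1 ^ (a - 1)) • ContinuousLinearMap.fst ℝ ℝ ℝ) p := by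
    have h := (hasDerivAt_pow a p.1).hasFDerivAt.comp p hasFDerivAt_fst
    refine h.congr_fderiv (Eq.symm ?_)
    refine ContinuousLinearMap.ext fun v => ?_
    simp [mul_comm]
  have h2 : HasFDerivAt (fun q : ℝ × ℝ => q.2 ^ b)
      (((b : ℝ) * p.2 ^ (b - 1)) • ContinuousLinearMap.snd ℝ ℝ ℝ) p := by
    have h := (hasDerivAt_pow b p.2).hasFDerivAt.comp p hasFDerivAt_snd
    refine h.congr_fderiv (Eq.symm ?_)
    refine ContinuousLinearMap.ext fun v => ?_
    simp [mul_comm]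
  have h := (h1.mul h2).const_mul c
  refine h.congr_fderiv (Eq.symm ?_)
  refine ContinuousLinearMap.ext fun v => ?_
  simp [DM]
  ring
lemma hasFDerivAt_A (l k : ℤ) (hl : -1 ≤ l) (hlk : l ≤ k) (p : ℝ × ℝ) :
    HasFDerivAt (A l k)
      (DV (((k:ℝ)-(l:ℝ)+1)/((k:ℝ)+2) * ((l:ℝ)+1) * (p.1 ^ l.toNat * p.2 ^ (k-l).toNat))
          (((k:ℝ)-(l:ℝ)+1)/((k:ℝ)+2) * ((k:ℝ)-(l:ℝ)) * (p.1 ^ (l+1).toNat * p.2 ^ (k-l-1).toNat))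
          (-(((l:ℝ)+1)/((k:ℝ)+2)) * (l:ℝ) * (p.1 ^ (l-1).toNat * p.2 ^ (k-l+1).toNat))
          (-(((l:ℝ)+1)/((k:ℝ)+2)) * ((k:ℝ)-(l:ℝ)+1) * (p.1 ^ l.toNat * p.2 ^ (k-l).toNat))) p := by
  rw [A_apply l k hl (by omega)]
  have h := (hasFDerivAt_cmono (((k:ℝ)-(l:ℝ)+1)/((k:ℝ)+2)) (l+1).toNat (k-l).toNat p).prodMk
            (hasFDerivAt_cmono (-(((l:ℝ)+1)/((k:ℝ)+2))) l.toNat (k-l+1).toNat p)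
  refine h.congr_fderiv (Eq.symm ?_)
  have e1 : ((l+1).toNat : ℝ) = (l:ℝ)+1 := by
    rw [cast_toNat _ (by omega)]; push_cast; ring
  have e2 : (l+1).toNat - 1 = l.toNat := by omega
  have e3 : (((k-l).toNat) : ℝ) = (k:ℝ)-(l:ℝ) := by
    rw [cast_toNat _ (by omega)]; push_cast; ring
  have e4 : (k-l).toNat - 1 = (k-l-1).toNat := by omega
  have e5 : (((k-l+1).toNat) : ℝ) = (k:ℝ)-(l:ℝ)+1 := by
    rw [cast_toNat _ (by omega)]; push_cast; ring
  have e6 : (k-l+1).toNat - 1 = (k-l).toNat := by omega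
  have e7 : l.toNat - 1 = (l-1).toNat := by omega
  have e8 : -(((l:ℝ)+1)/((k:ℝ)+2)) * (l.toNat : ℝ) = -(((l:ℝ)+1)/((k:ℝ)+2)) * (l:ℝ) := by
    rcases (by omega : l = -1 ∨ 0 ≤ l) with h' | h'
    · subst h'; norm_num
    · rw [cast_toNat _ h']
  unfold DV
  rw [e2, e4, e6, e7, e1, e3, e5]
  congr 1
  · congr 1 <;> ring
  · refine ContinuousLinearMap.ext fun v => ?_
    simp only [DM_apply]
    rw [show -(((l:ℝ)+1)/((k:ℝ)+2)) * (l.toNat : ℝ) * p.1 ^ (l-1).toNat * p.2 ^ (k-l+1).toNat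
        = -(((l:ℝ)+1)/((k:ℝ)+2)) * (l:ℝ) * p.1 ^ (l-1).toNat * p.2 ^ (k-l+1).toNat by
      rw [mul_assoc, mul_assoc] at *; rw [show -(((l:ℝ)+1)/((k:ℝ)+2)) * ((l.toNat : ℝ) * (p.1 ^ (l-1).toNat * p.2 ^ (k-l+1).toNat)) = -(((l:ℝ)+1)/((k:ℝ)+2)) * (l.toNat : ℝ) * (p.1 ^ (l-1).toNat * p.2 ^ (k-l+1).toNat) by ring, e8]; ring]
    ring
lemma hasFDerivAt_B (m n : ℤ) (hm : 0 ≤ m) (hmn : m ≤ n) (p : ℝ × ℝ) :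
    HasFDerivAt (B m n)
      (DV (((m:ℝ)+1) * (p.1 ^ m.toNat * p.2 ^ (n-m).toNat))
          (((n:ℝ)-(m:ℝ)) * (p.1 ^ (m+1).toNat * p.2 ^ (n-m-1).toNat))
          ((m:ℝ) * (p.1 ^ (m-1).toNat * p.2 ^ (n-m+1).toNat))
          (((n:ℝ)-(m:ℝ)+1) * (p.1 ^ m.toNat * p.2 ^ (n-m).toNat))) p := by
  have hB : B m n = fun p : ℝ × ℝ => ((1:ℝ) * (p.1 ^ (m+1).toNat * p.2 ^ (n-m).toNat),
      (1:ℝ) * (p.1 ^ m.toNat * p.2 ^ (n-m+1).toNat)) := by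
    rw [B_apply m n hm hmn]; funext p; norm_num
  rw [hB]
  have h := (hasFDerivAt_cmono (1:ℝ) (m+1).toNat (n-m).toNat p).prodMk
            (hasFDerivAt_cmono (1:ℝ) m.toNat (n-m+1).toNat p)
  refine h.congr_fderiv (Eq.symm ?_)
  have e1 : ((m+1).toNat : ℝ) = (m:ℝ)+1 := by rw [cast_toNat _ (by omega)]; push_cast; ring
  have e2 : (m+1).toNat - 1 = m.toNat := by omega
  have e3 : (((n-m).toNat) : ℝ) = (n:ℝ)-(m:ℝ) := by rw [cast_toNat _ (by omega)]; push_cast; ring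
  have e4 : (n-m).toNat - 1 = (n-m-1).toNat := by omega
  have e5 : (((n-m+1).toNat) : ℝ) = (n:ℝ)-(m:ℝ)+1 := by rw [cast_toNat _ (by omega)]; push_cast; ring
  have e6 : (n-m+1).toNat - 1 = (n-m).toNat := by omega
  have e7 : m.toNat - 1 = (m-1).toNat := by omega
  have e8 : ((m.toNat) : ℝ) = (m:ℝ) := cast_toNat _ hm
  refine ContinuousLinearMap.ext fun v => ?_
  rw [ContinuousLinearMap.prod_apply, DV_apply]
  refine Prod.ext ?_ ?_ <;> simp only [DM_apply] <;>
    simp only [e2, e4, e6, e7, e1, e3, e5, e8] <;> ring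
lemma bbA_apply (r : ℤ) (ar : ℝ) (hr : 1 ≤ r) :
    bbA r ar = fun p : ℝ × ℝ => (ar * (p.1 ^ 0 * p.2 ^ (r+1).toNat), (-1:ℝ) * (p.1 ^ 1 * p.2 ^ 0)) := by
  funext p
  unfold bbA A M
  have h1 : ¬ ((0:ℤ) ≤ 1 + 1 ∧ (0:ℤ) ≤ 0 - 1) := by omega
  have h2 : ((0:ℤ) ≤ 1 ∧ (0:ℤ) ≤ 0 - 1 + 1) := by omega
  have h3 : ((0:ℤ) ≤ -1 + 1 ∧ (0:ℤ) ≤ r - -1) := by omega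
  have h4 : ¬ ((0:ℤ) ≤ -1 ∧ (0:ℤ) ≤ r - -1 + 1) := by omega
  rw [if_neg h1, if_pos h2, if_pos h3, if_neg h4]
  have h5 : (r - -1).toNat = (r+1).toNat := by omega
  have h6 : (r:ℝ) + 2 ≠ 0 := by
    have : (1:ℝ) ≤ (r:ℝ) := by exact_mod_cast hr
    linarith
  rw [h5]
  refine Prod.ext ?_ ?_ <;> simp
  left
  field_simp
  ring
lemma hasFDerivAt_bbA (r : ℤ) (ar : ℝ) (hr : 1 ≤ r) (p : ℝ × ℝ) :
    HasFDerivAt (bbA r ar) (DV 0 (ar * ((r:ℝ)+1) * p.2 ^ r.toNat) (-1) 0) p := by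
  rw [bbA_apply r ar hr]
  have h := (hasFDerivAt_cmono ar 0 (r+1).toNat p).prodMk
            (hasFDerivAt_cmono (-1:ℝ) 1 0 p)
  refine h.congr_fderiv (Eq.symm ?_)
  have e1 : ((r+1).toNat : ℝ) = (r:ℝ)+1 := by rw [cast_toNat _ (by omega)]; push_cast; ring
  have e2 : (r+1).toNat - 1 = r.toNat := by omega
  refine ContinuousLinearMap.ext fun v => ?_
  rw [ContinuousLinearMap.prod_apply, DV_apply]
  refine Prod.ext ?_ ?_ <;> simp only [DM_apply]
  · rw [e2, e1]; norm_num
  · norm_num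
lemma bracket_A (r l k : ℤ) (ar : ℝ) (hr : 1 ≤ r) (hl : -1 ≤ l) (hlk : l ≤ k) (p : ℝ × ℝ) :
    lieBracket (A l k) (bbA r ar) p
      = ((k:ℝ)-(l:ℝ)+1) • A (l+1) k p
        + (-(ar * ((l:ℝ)+1) * ((k:ℝ)+(r:ℝ)+2) / ((k:ℝ)+2))) • A (l-1) (k+r) p := by
  unfold lieBracket
  rw [(hasFDerivAt_bbA r ar hr p).fderiv, (hasFDerivAt_A l k hl hlk p).fderiv]
  obtain ⟨b, hb⟩ : ∃ b : ℕ, k = l + b := ⟨(k-l).toNat, by omega⟩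
  subst hb
  lift r to ℕ using (by omega : (0:ℤ) ≤ r) with R hR
  have hR1 : 1 ≤ R := by exact_mod_cast hr
  rcases (by omega : l = -1 ∨ 0 ≤ l) with h | h
  · subst h
    have hz : (-(ar * (((-1:ℤ):ℝ)+1) * ((((-1:ℤ)+b:ℤ):ℝ)+((R:ℤ):ℝ)+2) / ((((-1:ℤ)+b:ℤ):ℝ)+2))) = 0 := by
      push_cast; ring
    rw [A_apply (-1) (-1+b) (by omega) (by omega), A_apply (-1+1) (-1+b) (by omega) (by omega),
      bbA_apply _ ar hr]
    rw [hz, zero_smul, add_zero]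
    simp only [DV_apply]
    have E1 : ((-1:ℤ)+1).toNat = 0 := by omega
    have E2 : ((-1:ℤ)+b - -1).toNat = b := by omega
    have E3 : ((-1:ℤ)).toNat = 0 := by omega
    have E4 : ((-1:ℤ)+b - -1 + 1).toNat = b+1 := by omega
    have E5 : ((-1:ℤ)+b - -1 - 1).toNat = b-1 := by omega
    have E6 : ((-1:ℤ)-1).toNat = 0 := by omega
    have E7 : ((-1:ℤ)+1+1).toNat = 1 := by omega
    have E8 : ((-1:ℤ)+b - (-1+1)).toNat = b-1 := by omega
    have E9 : ((-1:ℤ)+b - (-1+1)+1).toNat = b := by omega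
    have E10 : (((R:ℤ))+1).toNat = R+1 := by omega
    have E11 : ((R:ℤ)).toNat = R := by omega
    simp only [E1, E2, E3, E4, E5, E6, E7, E8, E9, E10, E11]
    push_cast
    have d1 : ((b:ℝ) + 1) ≠ 0 := by positivity
    refine Prod.ext ?_ ?_ <;> simp only [Prod.fst_sub, Prod.snd_sub, Prod.fst_add, Prod.snd_add, Prod.smul_fst, Prod.smul_snd, smul_eq_mul] <;> field_simp <;> ring
  · lift l to ℕ using h with a ha
    rw [A_apply a (a+b) (by omega) (by omega), A_apply ((a:ℤ)+1) (a+b) (by omega) (by omega),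
      A_apply ((a:ℤ)-1) ((a:ℤ)+b+R) (by omega) (by omega), bbA_apply _ ar hr]
    simp only [DV_apply]
    have E1 : ((a:ℤ)+1).toNat = a+1 := by omega
    have E2 : ((a:ℤ)+b-a).toNat = b := by omega
    have E3 : ((a:ℤ)).toNat = a := by omega
    have E4 : ((a:ℤ)+b-a+1).toNat = b+1 := by omega
    have E5 : ((a:ℤ)+b-a-1).toNat = b-1 := by omega
    have E6 : ((a:ℤ)-1).toNat = a-1 := by omega
    have E7 : ((a:ℤ)+1+1).toNat = a+2 := by omega
    have E8 : ((a:ℤ)+b-(a+1)).toNat = b-1 := by omega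
    have E9 : ((a:ℤ)+b-(a+1)+1).toNat = b := by omega
    have E10 : (((R:ℤ))+1).toNat = R+1 := by omega
    have E11 : ((R:ℤ)).toNat = R := by omega
    have E12 : ((a:ℤ)-1+1).toNat = a := by omega
    have E13 : ((a:ℤ)+b+R-(a-1)).toNat = b+R+1 := by omega
    have E14 : ((a:ℤ)+b+R-(a-1)+1).toNat = b+R+2 := by omega
    simp only [E1, E2, E3, E4, E5, E6, E7, E8, E9, E10, E11, E12, E13, E14]
    push_cast
    have d1 : ((a:ℝ) + b + 2) ≠ 0 := by positivity
    have d2 : ((a:ℝ) + b + R + 2) ≠ 0 := by positivity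
    refine Prod.ext ?_ ?_ <;> simp only [Prod.fst_sub, Prod.snd_sub, Prod.fst_add, Prod.snd_add, Prod.smul_fst, Prod.smul_snd, smul_eq_mul] <;> field_simp <;> ring
lemma bracket_B (r m n : ℤ) (ar : ℝ) (hr : 1 ≤ r) (hm : 1 ≤ m) (hmn : m ≤ n) (p : ℝ × ℝ) :
    lieBracket (B m n) (bbA r ar) p
      = ((n:ℝ)-(m:ℝ)) • B (m+1) n p
        + (ar * (r:ℝ)) • A (m-1) (n+r) p
        + (-(ar * (m:ℝ) * ((n:ℝ)+2) / ((n:ℝ)+(r:ℝ)+2))) • B (m-1) (n+r) p := by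
  unfold lieBracket
  rw [(hasFDerivAt_bbA r ar hr p).fderiv, (hasFDerivAt_B m n (by omega) hmn p).fderiv]
  obtain ⟨a, hb⟩ : ∃ a : ℕ, m = 1 + a := ⟨(m-1).toNat, by omega⟩
  subst hb
  obtain ⟨b, hb⟩ : ∃ b : ℕ, n = 1 + a + b := ⟨(n-1-a).toNat, by omega⟩
  subst hb
  lift r to ℕ using (by omega : (0:ℤ) ≤ r) with R hR
  have hR1 : 1 ≤ R := by exact_mod_cast hr
  rw [B_apply (1+(a:ℤ)) (1+a+b) (by omega) (by omega),
    A_apply (1+(a:ℤ)-1) (1+a+b+R) (by omega) (by omega),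
    B_apply (1+(a:ℤ)-1) (1+a+b+R) (by omega) (by omega), bbA_apply _ ar hr]
  simp only [DV_apply]
  have E1 : ((1:ℤ)+a).toNat = 1+a := by omega
  have E2 : ((1:ℤ)+a+1).toNat = a+2 := by omega
  have E3 : ((1:ℤ)+a+b-(1+a)).toNat = b := by omega
  have E4 : ((1:ℤ)+a+b-(1+a)+1).toNat = b+1 := by omega
  have E5 : ((1:ℤ)+a+b-(1+a)-1).toNat = b-1 := by omega
  have E6 : ((1:ℤ)+a-1).toNat = a := by omega
  have E7 : ((1:ℤ)+a-1+1).toNat = a+1 := by omega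
  have E8 : ((1:ℤ)+a+b+R-(1+a-1)).toNat = b+R+1 := by omega
  have E9 : ((1:ℤ)+a+b+R-(1+a-1)+1).toNat = b+R+2 := by omega
  have E10 : (((R:ℤ))+1).toNat = R+1 := by omega
  have E11 : ((R:ℤ)).toNat = R := by omega
  rcases Nat.eq_zero_or_pos b with hb0 | hb0
  · subst hb0
    have hz3 : ((1+(a:ℤ)+((0:ℕ):ℤ) : ℤ) : ℝ) - ((1+(a:ℤ) : ℤ) : ℝ) = 0 := by push_cast; ring
    rw [hz3, zero_smul, zero_add]
    simp only [E1, E2, E3, E4, E5, E6, E7, E8, E9, E10, E11]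
    push_cast
    have d1 : ((a:ℝ) + 0 + R + 3) ≠ 0 := by positivity
    refine Prod.ext ?_ ?_ <;> simp only [Prod.fst_sub, Prod.snd_sub, Prod.fst_add, Prod.snd_add, Prod.smul_fst, Prod.smul_snd, smul_eq_mul, Prod.fst_zero, Prod.snd_zero] <;> field_simp <;> ring
  · obtain ⟨c, hc⟩ : ∃ c : ℕ, b = c + 1 := ⟨b-1, by omega⟩
    subst hc
    rw [B_apply ((1:ℤ)+a+1) (1+(a:ℤ)+((c+1:ℕ):ℤ)) (by omega) (by omega)]
    have F2 : ((1:ℤ)+a+((c+1:ℕ):ℤ)-(1+a+1)).toNat = c := by omega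
    have F3 : ((1:ℤ)+a+((c+1:ℕ):ℤ)-(1+a+1)+1).toNat = c+1 := by omega
    have F4 : ((1:ℤ)+a+1+1).toNat = a+3 := by omega
    simp only [E1, E2, E3, E4, E5, E6, E7, E8, E9, E10, E11, F2, F3, F4]
    push_cast
    have d1 : ((a:ℝ) + c + R + 4) ≠ 0 := by positivity
    refine Prod.ext ?_ ?_ <;> simp only [Prod.fst_sub, Prod.snd_sub, Prod.fst_add, Prod.snd_add, Prod.smul_fst, Prod.smul_snd, smul_eq_mul] <;> field_simp <;> ring
lemma Z_smul (r m n : ℤ) (ar : ℝ) (hr : 1 ≤ r) (hm : 1 ≤ m) (hmn : m ≤ n) (p : ℝ × ℝ) :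
    Z m n p • bbA r ar p
      = A (m+1) n p + (-(((n:ℝ)-(m:ℝ))/((n:ℝ)+2))) • B (m+1) n p
        + ar • A (m-1) (n+r) p + (ar * (m:ℝ)/((n:ℝ)+(r:ℝ)+2)) • B (m-1) (n+r) p := by
  obtain ⟨a, hb⟩ : ∃ a : ℕ, m = 1 + a := ⟨(m-1).toNat, by omega⟩
  subst hb
  obtain ⟨b, hb⟩ : ∃ b : ℕ, n = 1 + a + b := ⟨(n-1-a).toNat, by omega⟩
  subst hb
  lift r to ℕ using (by omega : (0:ℤ) ≤ r) with R hR
  have hR1 : 1 ≤ R := by exact_mod_cast hr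
  unfold Z M
  rw [if_pos ⟨by omega, by omega⟩]
  rw [A_apply ((1:ℤ)+a+1) (1+a+b) (by omega) (by omega),
    A_apply ((1:ℤ)+a-1) (1+a+b+R) (by omega) (by omega),
    B_apply ((1:ℤ)+a-1) (1+a+b+R) (by omega) (by omega), bbA_apply _ ar hr]
  have E1 : ((1:ℤ)+a).toNat = 1+a := by omega
  have E2 : ((1:ℤ)+a+1).toNat = a+2 := by omega
  have E3 : ((1:ℤ)+a+b-(1+a)).toNat = b := by omega
  have E6 : ((1:ℤ)+a-1).toNat = a := by omega
  have E7 : ((1:ℤ)+a-1+1).toNat = a+1 := by omega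
  have E8 : ((1:ℤ)+a+b+R-(1+a-1)).toNat = b+R+1 := by omega
  have E9 : ((1:ℤ)+a+b+R-(1+a-1)+1).toNat = b+R+2 := by omega
  have E10 : (((R:ℤ))+1).toNat = R+1 := by omega
  have E12 : ((1:ℤ)+a+1+1).toNat = a+3 := by omega
  have E13 : ((1:ℤ)+a+b-(1+a+1)+1).toNat = b := by omega
  rcases Nat.eq_zero_or_pos b with hb0 | hb0
  · subst hb0
    have hz3 : -(((((1+(a:ℤ)+((0:ℕ):ℤ)) : ℤ) : ℝ) - ((1+(a:ℤ) : ℤ) : ℝ))/((((1+(a:ℤ)+((0:ℕ):ℤ)) : ℤ) : ℝ)+2)) = 0 := by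
      push_cast; ring
    rw [hz3, zero_smul, add_zero]
    simp only [E1, E2, E3, E6, E7, E8, E9, E10, E12, E13]
    push_cast
    have d1 : ((a:ℝ) + 0 + 3) ≠ 0 := by positivity
    have d2 : ((a:ℝ) + 0 + R + 3) ≠ 0 := by positivity
    refine Prod.ext ?_ ?_ <;> simp only [Prod.fst_sub, Prod.snd_sub, Prod.fst_add, Prod.snd_add, Prod.smul_fst, Prod.smul_snd, smul_eq_mul] <;> field_simp <;> ring
  · obtain ⟨c, hc⟩ : ∃ c : ℕ, b = c + 1 := ⟨b-1, by omega⟩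
    subst hc
    rw [B_apply ((1:ℤ)+a+1) (1+(a:ℤ)+((c+1:ℕ):ℤ)) (by omega) (by omega)]
    have F2 : ((1:ℤ)+a+((c+1:ℕ):ℤ)-(1+a+1)).toNat = c := by omega
    have F3 : ((1:ℤ)+a+((c+1:ℕ):ℤ)-(1+a+1)+1).toNat = c+1 := by omega
    simp only [E1, E2, E3, E6, E7, E8, E9, E10, E12, E13, F2, F3]
    push_cast
    have d1 : ((a:ℝ) + c + 4) ≠ 0 := by positivity
    have d2 : ((a:ℝ) + c + R + 4) ≠ 0 := by positivity
    refine Prod.ext ?_ ?_ <;> simp only [Prod.fst_sub, Prod.snd_sub, Prod.fst_add, Prod.snd_add, Prod.smul_fst, Prod.smul_snd, smul_eq_mul] <;> field_simp <;> ring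
lemma lieBracket_comb (Y X₀ X₁ : ℝ×ℝ → ℝ×ℝ) (W : ℕ → ℝ×ℝ → ℝ×ℝ) (u v : ℝ) (cc : ℕ → ℝ)
    (L : ℕ) (p : ℝ×ℝ)
    (h₀ : DifferentiableAt ℝ X₀ p) (h₁ : DifferentiableAt ℝ X₁ p)
    (hW : ∀ i ∈ Finset.range L, DifferentiableAt ℝ (W i) p) :
    lieBracket (fun q => u • X₀ q + v • X₁ q - ∑ i ∈ Finset.range L, cc i • W i q) Y p
      = u • lieBracket X₀ Y p + v • lieBracket X₁ Y p
        - ∑ i ∈ Finset.range L, cc i • lieBracket (W i) Y p := by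
  have hD : HasFDerivAt (fun q => u • X₀ q + v • X₁ q - ∑ i ∈ Finset.range L, cc i • W i q)
      (u • fderiv ℝ X₀ p + v • fderiv ℝ X₁ p - ∑ i ∈ Finset.range L, cc i • fderiv ℝ (W i) p) p :=
    ((h₀.hasFDerivAt.const_smul u).add (h₁.hasFDerivAt.const_smul v)).sub
      (HasFDerivAt.fun_sum fun i hi => (hW i hi).hasFDerivAt.const_smul (cc i))
  unfold lieBracket
  rw [hD.fderiv]
  simp only [ContinuousLinearMap.add_apply, ContinuousLinearMap.sub_apply,
    ContinuousLinearMap.coe_smul', Pi.smul_apply, ContinuousLinearMap.coe_sum', Finset.sum_apply,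
    map_add, map_sub, map_smul, map_sum, smul_sub]
  rw [Finset.sum_sub_distrib]
  abel
lemma poch_succ (a b : ℝ) (n : ℕ) : poch a b (n+1) = poch a b n * (a + (n:ℝ)*b) :=
  Finset.prod_range_succ _ n
lemma poch_zero (a b : ℝ) : poch a b 0 = 1 := Finset.prod_range_zero _
lemma poch_pos (a b : ℝ) (n : ℕ) (ha : 0 < a) (hb : 0 ≤ b) : 0 < poch a b n :=
  Finset.prod_pos fun j _ => by have : (0:ℝ) ≤ (j:ℝ) * b := by positivity
                                linarith
lemma cc_rec (ar mR nR rR : ℝ) (i : ℕ) (h1 : 0 < nR - mR + 1) (h2 : 0 ≤ rR + 2)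
    (h3 : nR + rR*((i:ℝ)+1) + 2 ≠ 0) :
    (ar^(i+1) * (nR + rR*((i:ℝ)+1) + 2) * poch (mR-1) (-2) i / poch (nR-mR+1) (rR+2) (i+2)) *
      (ar * (mR - 2*((i:ℝ)+1) + 1) * (nR + rR*((i:ℝ)+1) + rR + 2) / (nR + rR*((i:ℝ)+1) + 2))
    = (ar^(i+1+1) * (nR + rR*((i:ℝ)+1+1) + 2) * poch (mR-1) (-2) (i+1) /
        poch (nR-mR+1) (rR+2) (i+1+2)) * (nR - mR + (rR+2)*((i:ℝ)+1+1) + 1) := by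
  have e := poch_succ (nR-mR+1) (rR+2) (i+2)
  push_cast at e
  rw [e, poch_succ (mR-1) (-2) i]
  set P := poch (mR-1) (-2) i with hP
  set Q := poch (nR-mR+1) (rR+2) (i+2) with hQ2
  have hQ : poch (nR-mR+1) (rR+2) (i+2) ≠ 0 := ne_of_gt (poch_pos _ _ _ h1 h2)
  have h4 : nR - mR + 1 + ((i:ℝ)+2)*(rR+2) ≠ 0 := by
    have : (0:ℝ) ≤ ((i:ℝ)+2)*(rR+2) := by positivity
    linarith
  field_simp
  ring

/-- Odd case of the time-rescaling lemma: `Z(2l-1,n)·𝔸_r + [𝒵(2l-1,n), 𝔸_r] = 0`. -/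
theorem stmt8 (r n : ℤ) (ar : ℝ) (l : ℕ) (hr : 1 ≤ r) (hl : 1 ≤ l) (hn : 1 ≤ n)
    (hln : 2 * (l : ℤ) - 1 ≤ n) :
    (fun p => Z (2 * (l : ℤ) - 1) n p • bbA r ar p
        + lieBracket (calZ r ar (2 * (l : ℤ) - 1) n) (bbA r ar) p)
      = fun _ => (0 : ℝ × ℝ) := by
  funext p
  have hm1 : (1:ℤ) ≤ 2*(l:ℤ)-1 := by omega
  set m : ℤ := 2*(l:ℤ) - 1 with hmdef
  have hnR : (1:ℝ) ≤ (n:ℝ) := by exact_mod_cast hn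
  have hrR : (1:ℝ) ≤ (r:ℝ) := by exact_mod_cast hr
  have hmR : (1:ℝ) ≤ (m:ℝ) := by exact_mod_cast hm1
  have hmnR : (m:ℝ) ≤ (n:ℝ) := by exact_mod_cast hln
  set cc : ℕ → ℝ := fun i => ar ^ (i + 1) * ((n : ℝ) + (r : ℝ) * ((i : ℝ) + 1) + 2) *
      poch ((m : ℝ) - 1) (-2) i / poch ((n : ℝ) - (m : ℝ) + 1) ((r : ℝ) + 2) (i + 2) with hccdef
  set W : ℕ → ℝ × ℝ → ℝ × ℝ := fun i => A (m - 2 * ((i : ℤ) + 1)) (n + r * ((i : ℤ) + 1))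
    with hWdef
  have hL : (((m + 1) / 2).toNat) = l := by omega
  have hcal : calZ r ar m n = fun q => (1 / ((m : ℝ) - (n : ℝ) - 1)) • A m n q
      + (1 / ((n : ℝ) + 2)) • B m n q - ∑ i ∈ Finset.range l, cc i • W i q := by
    unfold calZ
    rw [hL]
  rw [hcal]
  rw [lieBracket_comb (bbA r ar) (A m n) (B m n) W (1 / ((m : ℝ) - (n : ℝ) - 1))
    (1 / ((n : ℝ) + 2)) cc l p
    (hasFDerivAt_A m n (by omega) (by omega) p).differentiableAt
    (hasFDerivAt_B m n (by omega) (by omega) p).differentiableAt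
    (fun i hi => by
      simp only [hWdef]
      exact (hasFDerivAt_A _ _ (by have := Finset.mem_range.mp hi; omega)
        (by have := Finset.mem_range.mp hi
            have hri : (0:ℤ) ≤ r * ((i:ℤ)+1) := mul_nonneg (by omega) (by positivity)
            omega) p).differentiableAt)]
  rw [Z_smul r m n ar hr hm1 hln p, bracket_A r m n ar hr (by omega) hln p,
      bracket_B r m n ar hr hm1 hln p]
  set g : ℕ → ℝ × ℝ := fun j => (cc j * ((n:ℝ) - (m:ℝ) + ((r:ℝ)+2)*((j:ℝ)+1) + 1)) •
      A (m - 2*((j:ℤ)+1) + 1) (n + r*((j:ℤ)+1)) p with hgdef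
  have hsum : ∑ i ∈ Finset.range l, cc i • lieBracket (W i) (bbA r ar) p = g 0 - g l := by
    rw [← Finset.sum_range_sub' g l]
    refine Finset.sum_congr rfl fun i hi => ?_
    have hi' : i < l := Finset.mem_range.mp hi
    simp only [hWdef]
    have hri : (0:ℤ) ≤ r * ((i:ℤ)+1) := mul_nonneg (by omega) (by positivity)
    rw [bracket_A r (m - 2*((i:ℤ)+1)) (n + r*((i:ℤ)+1)) ar hr (by omega) (by omega) p]
    simp only [hgdef]
    rw [show m - 2*((i:ℤ)+1) - 1 = m - 2*(((i+1:ℕ):ℤ)+1) + 1 from by push_cast; ring,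
        show n + r*((i:ℤ)+1) + r = n + r*(((i+1:ℕ):ℤ)+1) from by push_cast; ring,
        show m - 2*((i:ℤ)+1) + 1 = m - 2*(((i:ℕ):ℤ)+1) + 1 from by push_cast; ring]
    match_scalars
    · push_cast
      ring
    · simp only [hccdef]
      push_cast
      have h3 : (n:ℝ) + (r:ℝ)*((i:ℝ)+1) + 2 ≠ 0 := by
        have h0i : (0:ℝ) ≤ (i:ℝ) := Nat.cast_nonneg i
        nlinarith
      linear_combination (-1 : ℝ) * cc_rec ar (m:ℝ) (n:ℝ) (r:ℝ) i (by linarith) (by linarith) h3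
  rw [hsum]
  have hgl : g l = 0 := by
    have hpz : poch ((m:ℝ)-1) (-2) l = 0 := by
      refine Finset.prod_eq_zero (Finset.mem_range.mpr (by omega : l - 1 < l)) ?_
      have hc : ((l - 1 : ℕ) : ℝ) = (l:ℝ) - 1 := by
        rw [Nat.cast_sub hl]; norm_num
      have hm' : (m:ℝ) = 2*(l:ℝ) - 1 := by rw [hmdef]; push_cast; ring
      rw [hc, hm']; ring
    have hccl : cc l = 0 := by simp only [hccdef]; rw [hpz]; ring
    simp only [hgdef, hccl]
    rw [zero_mul, zero_smul]
  rw [hgl, sub_zero]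
  simp only [hgdef, hccdef]
  rw [show m - 2*(((0:ℕ):ℤ)+1) + 1 = m - 1 from by push_cast; ring,
      show n + r*(((0:ℕ):ℤ)+1) = n + r from by push_cast; ring]
  have hp0 : poch ((m:ℝ)-1) (-2) 0 = 1 := poch_zero _ _
  have hp2 : poch ((n:ℝ)-(m:ℝ)+1) ((r:ℝ)+2) (0+2)
      = ((n:ℝ)-(m:ℝ)+1) * ((n:ℝ)-(m:ℝ)+1+((r:ℝ)+2)) := by
    have e1 := poch_succ ((n:ℝ)-(m:ℝ)+1) ((r:ℝ)+2) 1
    have e0 := poch_succ ((n:ℝ)-(m:ℝ)+1) ((r:ℝ)+2) 0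
    rw [poch_zero] at e0
    rw [show (0:ℕ)+2 = 1+1 from rfl, e1, e0]
    push_cast
    ring
  rw [hp0, hp2]
  have d1 : (m:ℝ) - (n:ℝ) - 1 ≠ 0 := by intro h; nlinarith
  have d2 : (n:ℝ) + 2 ≠ 0 := by nlinarith
  have d3 : (n:ℝ) + (r:ℝ) + 2 ≠ 0 := by nlinarith
  have d4 : (n:ℝ) - (m:ℝ) + 1 ≠ 0 := by nlinarith
  have d5 : (n:ℝ) - (m:ℝ) + 1 + ((r:ℝ)+2) ≠ 0 := by nlinarith
  match_scalars <;> push_cast <;> field_simp <;> ring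
end
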